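/- In a pre-Hilbert left 𝕆-module H, for all u, v ∈ H and p ∈ 𝕆 the second associator is antisymmetric: [p,v,u] = −[p,u,v], where [p,u,v] := ⟨p·u, v⟩ − p·⟨u, v⟩. -/

import Mathlib

noncomputable section

/-- The octonions, realized as the Cayley–Dickson double of the quaternions. -/
abbrev 𝕆 : Type := Quaternion ℝ × Quaternion ℝ

/-- Octonion multiplication via the Cayley–Dickson formula
`(a,b)(c,d) = (ac - d̄b, da + bc̄)`. -/
def omul (x y : 𝕆) : 𝕆 :=
  (x.1 * y.1 - star y.2 * x.2, y.2 * x.1 + x.2 * star y.1)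

/-- Octonionic conjugation. -/
def oconj (x : 𝕆) : 𝕆 := (star x.1, -x.2)

/-- The octonion `1`. -/
def oone : 𝕆 := (1, 0)

/-- Real part of an octonion. -/
def ore (x : 𝕆) : ℝ := x.1.re

/-- Embedding of the reals into the octonions. -/
def oreal (r : ℝ) : 𝕆 := ((r : Quaternion ℝ), 0)

/-- Squared norm of an octonion. -/
def onormSq (x : 𝕆) : ℝ := ore (omul x (oconj x))

/-- A pre-Hilbert left `𝕆`-module: a real vector space `H` with an `ℝ`-linear
left `𝕆`-scalar multiplication `sm` satisfying `1·x = x` and the alternating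
left-associator law, together with an `ℝ`-bilinear `𝕆`-valued inner product `inn`
which is `𝕆`-para-linear, hermitian and positive definite. -/
structure PreHilbO (H : Type*) [AddCommGroup H] [Module ℝ H] where
  sm : 𝕆 →ₗ[ℝ] H →ₗ[ℝ] H
  inn : H →ₗ[ℝ] H →ₗ[ℝ] 𝕆
  one_sm : ∀ x : H, sm oone x = x
  alt : ∀ (p q : 𝕆) (x : H),
    sm (omul p q) x - sm p (sm q x) = -(sm (omul q p) x - sm q (sm p x))
  para : ∀ (p : 𝕆) (u v : H), ore (inn (sm p u) v - omul p (inn u v)) = 0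
  herm : ∀ u v : H, inn u v = oconj (inn v u)
  pos : ∀ u : H, ∃ r : ℝ, 0 ≤ r ∧ inn u u = oreal r
  posdef : ∀ u : H, inn u u = 0 → u = 0

/-! ### Auxiliary octonion lemmas -/

lemma ore_add' (x y : 𝕆) : ore (x + y) = ore x + ore y := by simp [ore]

lemma ore_sub' (x y : 𝕆) : ore (x - y) = ore x - ore y := by simp [ore]

lemma omul_add_right' (q x y : 𝕆) : omul q (x + y) = omul q x + omul q y := by
  simp only [omul, Prod.fst_add, Prod.snd_add, star_add, Prod.mk_add_mk, Prod.ext_iff,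
    mul_add, add_mul]
  constructor <;> abel

lemma omul_sub_right' (q x y : 𝕆) : omul q (x - y) = omul q x - omul q y := by
  simp only [omul, Prod.fst_sub, Prod.snd_sub, star_sub, Prod.mk_sub_mk, Prod.ext_iff,
    mul_sub, sub_mul]
  constructor <;> abel

lemma ore_omul_comm' (x y : 𝕆) : ore (omul x y) = ore (omul y x) := by
  simp [omul, ore, Quaternion.re_mul, Quaternion.re_star, Quaternion.imI_star,
    Quaternion.imJ_star, Quaternion.imK_star]; ring

lemma ore_omul_assoc' (x y z : 𝕆) : ore (omul x (omul y z)) = ore (omul (omul x y) z) := by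
  simp [omul, ore, Quaternion.re_mul, Quaternion.imI_mul, Quaternion.imJ_mul, Quaternion.imK_mul,
    Quaternion.re_star, Quaternion.imI_star, Quaternion.imJ_star, Quaternion.imK_star]; ring

lemma ore_oconj' (x : 𝕆) : ore (oconj x) = ore x := by simp [ore, oconj]

lemma oconj_omul' (x y : 𝕆) : oconj (omul x y) = omul (oconj y) (oconj x) := by
  simp [oconj, omul, Prod.ext_iff, StarMul.star_mul]

lemma oconj_eq' (x : 𝕆) : oconj x = oreal (2 * ore x) - x := by
  simp [oconj, oreal, ore, Prod.ext_iff]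
  ext <;> simp [Quaternion.re_star] <;> ring

lemma oreal_eq' (r : ℝ) : oreal r = r • oone := by
  simp [oreal, oone, Prod.ext_iff, Prod.smul_def]
  ext <;> simp [Quaternion.re_one, Quaternion.imI_one, Quaternion.imJ_one, Quaternion.imK_one]

lemma ore_omul_oreal' (y : 𝕆) (r : ℝ) : ore (omul y (oreal r)) = r * ore y := by
  simp [omul, oreal, ore, Quaternion.re_mul]; ring

set_option maxHeartbeats 1000000 in
lemma ore_nondeg' (x : 𝕆) (h : ∀ q : 𝕆, ore (omul q x) = 0) : x = 0 := by
  have h1 := h (oconj x)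
  simp [omul, oconj, ore, Quaternion.re_mul, Quaternion.re_star, Quaternion.imI_star,
    Quaternion.imJ_star, Quaternion.imK_star] at h1
  have e1 : x.1 = 0 := by
    ext <;> simp only [Quaternion.re_zero, Quaternion.imI_zero, Quaternion.imJ_zero,
        Quaternion.imK_zero] <;>
      nlinarith [h1, mul_self_nonneg x.1.re, mul_self_nonneg x.1.imI, mul_self_nonneg x.1.imJ,
        mul_self_nonneg x.1.imK, mul_self_nonneg x.2.re, mul_self_nonneg x.2.imI,
        mul_self_nonneg x.2.imJ, mul_self_nonneg x.2.imK]
  have e2 : x.2 = 0 := by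
    ext <;> simp only [Quaternion.re_zero, Quaternion.imI_zero, Quaternion.imJ_zero,
        Quaternion.imK_zero] <;>
      nlinarith [h1, mul_self_nonneg x.1.re, mul_self_nonneg x.1.imI, mul_self_nonneg x.1.imJ,
        mul_self_nonneg x.1.imK, mul_self_nonneg x.2.re, mul_self_nonneg x.2.imI,
        mul_self_nonneg x.2.imJ, mul_self_nonneg x.2.imK]
  exact Prod.ext e1 e2

/-! ### Auxiliary module lemmas -/

section Aux

variable {H : Type*} [AddCommGroup H] [Module ℝ H] (h : PreHilbO H)

lemma preP (p : 𝕆) (a b : H) :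
    ore (h.inn (h.sm p a) b) = ore (omul p (h.inn a b)) := by
  have := h.para p a b
  rw [ore_sub'] at this
  linarith

lemma preHsym (a b : H) : ore (h.inn a b) = ore (h.inn b a) := by
  rw [h.herm a b, ore_oconj']

lemma sm_oreal (r : ℝ) (x : H) : h.sm (oreal r) x = r • x := by
  rw [oreal_eq', map_smul, LinearMap.smul_apply, h.one_sm]

lemma sm_oconj (p : 𝕆) (x : H) : h.sm (oconj p) x = (2 * ore p) • x - h.sm p x := by
  rw [oconj_eq', map_sub, LinearMap.sub_apply, sm_oreal]

lemma altq (p q : 𝕆) (x : H) :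
    h.sm q (h.sm p x) = h.sm (omul q p) x + h.sm (omul p q) x - h.sm p (h.sm q x) := by
  have h1 := h.alt p q x
  rw [neg_sub] at h1
  rw [add_sub_assoc, h1]
  abel

lemma preE1 (p q : 𝕆) (a b : H) :
    ore (omul q (h.inn (h.sm p a) b))
      = ore (omul (omul q p) (h.inn a b)) + ore (omul (omul p q) (h.inn a b))
        - ore (omul p (h.inn (h.sm q a) b)) := by
  rw [← preP h q (h.sm p a) b, altq]
  simp only [map_sub, map_add, LinearMap.sub_apply, LinearMap.add_apply, ore_sub', ore_add']
  rw [preP, preP, preP]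

lemma preE2 (p q : 𝕆) (a b : H) :
    ore (omul q (h.inn (h.sm p a) b))
      = ore (h.inn (h.sm (oconj p) (h.sm (oconj q) b)) a) := by
  calc ore (omul q (h.inn (h.sm p a) b))
      = ore (oconj (omul q (h.inn (h.sm p a) b))) := (ore_oconj' _).symm
    _ = ore (omul (oconj (h.inn (h.sm p a) b)) (oconj q)) := by rw [oconj_omul']
    _ = ore (omul (h.inn b (h.sm p a)) (oconj q)) := by rw [← h.herm]
    _ = ore (omul (oconj q) (h.inn b (h.sm p a))) := ore_omul_comm' _ _
    _ = ore (h.inn (h.sm (oconj q) b) (h.sm p a)) := (preP h _ _ _).symm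
    _ = ore (h.inn (h.sm p a) (h.sm (oconj q) b)) := preHsym h _ _
    _ = ore (omul p (h.inn a (h.sm (oconj q) b))) := preP h _ _ _
    _ = ore (oconj (omul p (h.inn a (h.sm (oconj q) b)))) := (ore_oconj' _).symm
    _ = ore (omul (oconj (h.inn a (h.sm (oconj q) b))) (oconj p)) := by rw [oconj_omul']
    _ = ore (omul (h.inn (h.sm (oconj q) b) a) (oconj p)) := by rw [← h.herm]
    _ = ore (omul (oconj p) (h.inn (h.sm (oconj q) b) a)) := ore_omul_comm' _ _
    _ = ore (h.inn (h.sm (oconj p) (h.sm (oconj q) b)) a) := (preP h _ _ _).symm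

lemma preE3 (p q : 𝕆) (x : H) :
    h.sm (oconj p) (h.sm (oconj q) x) + h.sm q (h.sm p x)
      = h.sm (oconj q) (h.sm (oconj p) x) + h.sm p (h.sm q x) := by
  simp only [sm_oconj, map_sub, map_smul, smul_sub, smul_smul]
  module

end Aux

/-- In a pre-Hilbert left octonionic module the second associator is
antisymmetric in its last two arguments. -/
theorem stmt_3 {H : Type*} [AddCommGroup H] [Module ℝ H] (h : PreHilbO H)
    (p : 𝕆) (u v : H) :
    h.inn (h.sm p v) u - omul p (h.inn v u)
      = -(h.inn (h.sm p u) v - omul p (h.inn u v)) := by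
  set F : 𝕆 → 𝕆 → ℝ := fun p q =>
    ore (omul q (h.inn (h.sm p u) v)) + ore (omul q (h.inn (h.sm p v) u))
      - ore (omul (omul q p) (h.inn u v)) - ore (omul (omul q p) (h.inn v u)) with hF
  -- sum of the two inner products is real
  have hsum : h.inn u v + h.inn v u = oreal (2 * ore (h.inn u v)) := by
    have : h.inn v u = oconj (h.inn u v) := h.herm v u
    rw [this, oconj_eq']
    abel
  -- antisymmetry of F
  have anti : ∀ p q : 𝕆, F p q = - F q p := by
    intro p q
    simp only [hF]
    rw [preE1 h p q u v, preE1 h p q v u]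
    ring
  -- symmetry of F
  have symm : ∀ p q : 𝕆, F p q = F q p := by
    intro p q
    simp only [hF]
    have k1 : ∀ p q : 𝕆,
        ore (omul q (h.inn (h.sm p u) v)) + ore (omul q (h.inn (h.sm p v) u))
          = ore (h.inn (h.sm (oconj p) (h.sm (oconj q) v) + h.sm q (h.sm p v)) u) := by
      intro p q
      rw [preE2 h p q u v, ← preP h q (h.sm p v) u, map_add, LinearMap.add_apply, ore_add']
    have k2 : ∀ p q : 𝕆,
        ore (omul (omul q p) (h.inn u v)) + ore (omul (omul q p) (h.inn v u))
          = 2 * ore (h.inn u v) * ore (omul q p) := by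
      intro p q
      rw [← ore_add', ← omul_add_right', hsum, ore_omul_oreal']
    have e3 := preE3 h p q v
    have c := ore_omul_comm' q p
    calc ore (omul q (h.inn (h.sm p u) v)) + ore (omul q (h.inn (h.sm p v) u))
          - ore (omul (omul q p) (h.inn u v)) - ore (omul (omul q p) (h.inn v u))
        = ore (h.inn (h.sm (oconj p) (h.sm (oconj q) v) + h.sm q (h.sm p v)) u)
            - 2 * ore (h.inn u v) * ore (omul q p) := by
          rw [← k1 p q]; rw [← k2 p q]; ring
      _ = ore (h.inn (h.sm (oconj q) (h.sm (oconj p) v) + h.sm p (h.sm q v)) u)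
            - 2 * ore (h.inn u v) * ore (omul p q) := by rw [e3, c]
      _ = ore (omul p (h.inn (h.sm q u) v)) + ore (omul p (h.inn (h.sm q v) u))
          - ore (omul (omul p q) (h.inn u v)) - ore (omul (omul p q) (h.inn v u)) := by
          rw [← k1 q p]; rw [← k2 q p]; ring
  have Fzero : ∀ q : 𝕆, F p q = 0 := by
    intro q
    have := anti p q
    have := symm p q
    linarith [anti p q, symm p q, anti q p]
  -- conclude
  have hB : (h.inn (h.sm p v) u - omul p (h.inn v u))
      + (h.inn (h.sm p u) v - omul p (h.inn u v)) = 0 := by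
    apply ore_nondeg'
    intro q
    have hq := Fzero q
    simp only [hF] at hq
    rw [omul_add_right', omul_sub_right', omul_sub_right', ore_add', ore_sub', ore_sub',
      ore_omul_assoc' q p (h.inn v u), ore_omul_assoc' q p (h.inn u v)]
    linarith
  exact eq_neg_of_add_eq_zero_left hB
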